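/- Let p ≥ n > 1 be real, and let c_{pn}(z,u) := 2z(4−z)(1−u)^{2n+2} u^{2n} [(1 − zu + zu²)^{p/2} − (1−u)^p]² / ([(1−u)^{2n} u² + (1−u)² u^{2n}][(1−u)^p u^n + (1−u)^n u^p]²) on [0,4] × (0,1), extended by c_{pn}(z,0) := p² z(4−z)(2−z)²/(2(1+3δ_{pn})) and c_{pn}(z,1) := 2z(4−z)/(1+3δ_{pn}). Then for all nonzero h, ℓ ∈ ℝ^d, with z, u defined by cos θ_{hℓ} = 1 − z/2 and |h| = (u/(1−u))|ℓ|, it holds that (|h+ℓ|^p − |ℓ|^p)² sin² θ_{hℓ} / (|h|^p |ℓ|^{n−1} + |h|^n |ℓ|^{p−1})² = (c_{pn}(z,u)/8)(1/|h|^{2n−2} + 1/|ℓ|^{2n−2}). -/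

import Mathlib

open scoped BigOperators
noncomputable section

/-- Kronecker delta `δ_{pn}`. -/
def kdelta (p n : ℝ) : ℝ := if p = n then 1 else 0

/-- The function `c_{pn}` on `[0,4] × [0,1]`, extended by its boundary values at `u = 0, 1`. -/
def cpn (p n : ℝ) (z u : ℝ) : ℝ :=
  if u = 0 then p ^ 2 * z * (4 - z) * (2 - z) ^ 2 / (2 * (1 + 3 * kdelta p n))
  else if u = 1 then 2 * z * (4 - z) / (1 + 3 * kdelta p n)
  else 2 * z * (4 - z) * (1 - u) ^ (2 * n + 2) * u ^ (2 * n) *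
      ((1 - z * u + z * u ^ 2) ^ (p / 2) - (1 - u) ^ p) ^ 2 /
    (((1 - u) ^ (2 * n) * u ^ 2 + (1 - u) ^ 2 * u ^ (2 * n)) *
      ((1 - u) ^ p * u ^ n + (1 - u) ^ n * u ^ p) ^ 2)

lemma rpow_two_mul_sub_two (x : ℝ) (hx : 0 < x) (n : ℝ) :
    x ^ (2 * n - 2) = (x ^ n) ^ 2 / x ^ 2 := by
  rw [show 2 * n - 2 = n + n - (1 + 1) by ring, Real.rpow_sub hx, Real.rpow_add hx,
    Real.rpow_add hx, Real.rpow_one]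
  ring

lemma rpow_two_mul (x : ℝ) (hx : 0 < x) (n : ℝ) : x ^ (2 * n) = (x ^ n) ^ 2 := by
  rw [show 2 * n = n + n by ring, Real.rpow_add hx]; ring

lemma rpow_two_mul_add_two (x : ℝ) (hx : 0 < x) (n : ℝ) :
    x ^ (2 * n + 2) = (x ^ n) ^ 2 * x ^ 2 := by
  rw [show 2 * n + 2 = n + n + (1 + 1) by ring, Real.rpow_add hx, Real.rpow_add hx,
    Real.rpow_add hx, Real.rpow_one]
  ring

lemma rpow_sub_one (x : ℝ) (hx : 0 < x) (n : ℝ) : x ^ (n - 1) = x ^ n / x := by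
  rw [Real.rpow_sub hx, Real.rpow_one]

/-- For real `p ≥ n > 1` and nonzero `h, ℓ ∈ ℝ^d`, with `z, u` defined by
`cos θ_{hℓ} = 1 - z/2` and `|h| = (u/(1-u))|ℓ|` (so `u ∈ (0,1)`), one has
`(|h+ℓ|^p - |ℓ|^p)² sin² θ_{hℓ} / (|h|^p|ℓ|^{n-1} + |h|^n|ℓ|^{p-1})²
  = (c_{pn}(z,u)/8)(|h|^{-(2n-2)} + |ℓ|^{-(2n-2)})`. -/
theorem cpn_identity (d : ℕ) (p n : ℝ) (hpn : n ≤ p) (hn : 1 < n)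
    (h ℓ : EuclideanSpace ℝ (Fin d)) (hh : h ≠ 0) (hℓ : ℓ ≠ 0) (z u : ℝ)
    (hu0 : 0 < u) (hu1 : u < 1)
    (hz : Real.cos (InnerProductGeometry.angle h ℓ) = 1 - z / 2)
    (hu : ‖h‖ = u / (1 - u) * ‖ℓ‖) :
    (‖h + ℓ‖ ^ p - ‖ℓ‖ ^ p) ^ 2 * Real.sin (InnerProductGeometry.angle h ℓ) ^ 2 /
        (‖h‖ ^ p * ‖ℓ‖ ^ (n - 1) + ‖h‖ ^ n * ‖ℓ‖ ^ (p - 1)) ^ 2 =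
      cpn p n z u / 8 * (1 / ‖h‖ ^ (2 * n - 2) + 1 / ‖ℓ‖ ^ (2 * n - 2)) := by
  have hLpos : (0:ℝ) < ‖ℓ‖ := norm_pos_iff.mpr hℓ
  have hHpos : (0:ℝ) < ‖h‖ := norm_pos_iff.mpr hh
  have hs : (0:ℝ) < 1 - u := by linarith
  -- inner product
  have hinner : (inner ℝ h ℓ : ℝ) = (1 - z / 2) * (‖h‖ * ‖ℓ‖) := by
    rw [← hz, InnerProductGeometry.cos_angle]
    field_simp
  -- squared norm of h + ℓ
  have hnormsq : ‖h + ℓ‖ ^ 2 = (‖ℓ‖ / (1 - u)) ^ 2 * (1 - z * u + z * u ^ 2) := by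
    rw [norm_add_sq_real, hinner, hu]
    field_simp
    ring
  have hQnn : 0 ≤ 1 - z * u + z * u ^ 2 := by
    have h1 : 1 - z * u + z * u ^ 2 = (‖h + ℓ‖ * ((1 - u) / ‖ℓ‖)) ^ 2 := by
      rw [mul_pow, hnormsq]
      field_simp
    rw [h1]; positivity
  -- rpow of the norm of the sum
  have hrp : ‖h + ℓ‖ ^ p = ‖ℓ‖ ^ p / (1 - u) ^ p * (1 - z * u + z * u ^ 2) ^ (p / 2) := by
    have h1 : ‖h + ℓ‖ ^ p = ((‖h + ℓ‖ ^ 2 : ℝ)) ^ (p / 2) := by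
      rw [← Real.rpow_natCast ‖h + ℓ‖ 2, ← Real.rpow_mul (norm_nonneg _),
        show ((2:ℕ):ℝ) * (p / 2) = p by push_cast; ring]
    rw [h1, hnormsq, Real.mul_rpow (by positivity) hQnn,
      ← Real.rpow_natCast (‖ℓ‖ / (1 - u)) 2, ← Real.rpow_mul (by positivity),
      show ((2:ℕ):ℝ) * (p / 2) = p by push_cast; ring,
      Real.div_rpow hLpos.le hs.le]
  -- expand cpn
  rw [cpn, if_neg hu0.ne', if_neg hu1.ne]
  -- sin squared
  rw [Real.sin_sq, hz]
  -- expand all rpow exponents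
  rw [rpow_two_mul_sub_two _ hHpos, rpow_two_mul_sub_two _ hLpos,
    rpow_two_mul _ hs, rpow_two_mul _ hu0, rpow_two_mul_add_two _ hs,
    rpow_sub_one _ hLpos, rpow_sub_one _ hLpos, hrp]
  -- expand ‖h‖ powers
  have hHn : ‖h‖ ^ n = u ^ n / (1 - u) ^ n * ‖ℓ‖ ^ n := by
    rw [hu, Real.mul_rpow (by positivity) hLpos.le, Real.div_rpow hu0.le hs.le]
  have hHp : ‖h‖ ^ p = u ^ p / (1 - u) ^ p * ‖ℓ‖ ^ p := by
    rw [hu, Real.mul_rpow (by positivity) hLpos.le, Real.div_rpow hu0.le hs.le]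
  rw [hHn, hHp, hu]
  -- now pure algebra
  have hup : 0 < u ^ p := Real.rpow_pos_of_pos hu0 p
  have hun : 0 < u ^ n := Real.rpow_pos_of_pos hu0 n
  have hsp : 0 < (1 - u) ^ p := Real.rpow_pos_of_pos hs p
  have hsn : 0 < (1 - u) ^ n := Real.rpow_pos_of_pos hs n
  have hLp : 0 < ‖ℓ‖ ^ p := Real.rpow_pos_of_pos hLpos p
  have hLn : 0 < ‖ℓ‖ ^ n := Real.rpow_pos_of_pos hLpos n
  set A := (1 - z * u + z * u ^ 2) ^ (p / 2)
  set a := u ^ p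
  set b := u ^ n
  set c := (1 - u) ^ p
  set e := (1 - u) ^ n
  set Lp := ‖ℓ‖ ^ p
  set Ln := ‖ℓ‖ ^ n
  set L := ‖ℓ‖
  have key1 : a / c * Lp * (Ln / L) + b / e * Ln * (Lp / L) ≠ 0 := by positivity
  have key2 : e ^ 2 * u ^ 2 + (1 - u) ^ 2 * b ^ 2 ≠ 0 := by positivity
  have key3 : c * b + e * a ≠ 0 := by positivity
  field_simp
  ring
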